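/- Let K be a field, n ≥ 1, and let f be a multilinear polynomial of degree m. For any upper triangular matrix units E_{i_1,j_1}, …, E_{i_m,j_m} in UT_n(K) (so i_l ≤ j_l for each l), the evaluation f(E_{i_1,j_1}, …, E_{i_m,j_m}) is either the zero matrix or a nonzero scalar multiple of a single upper triangular matrix unit E_{p,q} with p ≤ q. -/

import Mathlib

/-- Evaluation of the multilinear polynomial `∑ σ, α σ • x_{σ(1)} ⋯ x_{σ(m)}`
at the tuple `a` of elements of the `K`-algebra `A`. -/
noncomputable def mEval {K A : Type*} [Field K] [Ring A] [Algebra K A]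
    {m : ℕ} (α : Equiv.Perm (Fin m) → K) (a : Fin m → A) : A :=
  ∑ σ : Equiv.Perm (Fin m), α σ • (List.ofFn fun i => a (σ i)).prod

/-- A product of matrix units is zero or a single matrix unit, whose endpoints
bound the entries of all the factors. -/
lemma prod_stdBasis_units {K : Type*} [Field K] {n : ℕ}
    (L : List (Fin n × Fin n)) (hL : L ≠ []) (hle : ∀ p ∈ L, p.1 ≤ p.2) :
    (L.map fun p => Matrix.single p.1 p.2 (1 : K)).prod = 0 ∨
      ∃ a ∈ L, ∃ b ∈ L,
        (L.map fun p => Matrix.single p.1 p.2 (1 : K)).prod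
          = Matrix.single a.1 b.2 (1 : K) ∧
        ∀ p ∈ L, a.1 ≤ p.1 ∧ p.2 ≤ b.2 := by
  induction L with
  | nil => exact absurd rfl hL
  | cons x rest ih =>
    rcases eq_or_ne rest [] with rfl | hrest
    · right
      refine ⟨x, by simp, x, by simp, by simp, ?_⟩
      rintro p hp
      simp only [List.mem_cons, List.not_mem_nil, or_false] at hp
      subst hp; exact ⟨le_refl _, le_refl _⟩
    · have hle' : ∀ p ∈ rest, p.1 ≤ p.2 := fun p hp => hle p (List.mem_cons_of_mem _ hp)
      rcases ih hrest hle' with h0 | ⟨a, ha, b, hb, hprod, hbd⟩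
      · left
        simp only [List.map_cons, List.prod_cons, h0, mul_zero]
      · rcases eq_or_ne x.2 a.1 with hx | hx
        · right
          refine ⟨x, List.mem_cons_self, b, List.mem_cons_of_mem _ hb, ?_, ?_⟩
          · simp only [List.map_cons, List.prod_cons, hprod, ← hx,
              Matrix.single_mul_single_same, one_mul]
          · rintro p hp
            rcases List.mem_cons.mp hp with rfl | hp
            · exact ⟨le_refl _, hx ▸ le_trans (hle' a ha) (hbd a ha).2⟩
            · exact ⟨le_trans (hle x (List.mem_cons_self)) (hx ▸ (hbd p hp).1),
                (hbd p hp).2⟩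
        · left
          rw [List.map_cons, List.prod_cons, hprod,
            Matrix.single_mul_single_of_ne (h := hx)]

/-- Any evaluation of a multilinear polynomial on upper triangular matrix units
`E_{i_l, j_l}` (with `i_l ≤ j_l`) is either zero or a nonzero scalar multiple of a single
upper triangular matrix unit. -/
theorem mEval_matrix_units {K : Type*} [Field K] (n m : ℕ) (hn : 1 ≤ n) (hm : 1 ≤ m)
    (α : Equiv.Perm (Fin m) → K) (i j : Fin m → Fin n) (hij : ∀ l, i l ≤ j l) :
    mEval α (fun l => Matrix.single (i l) (j l) (1 : K)) = 0 ∨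
      ∃ (p q : Fin n) (c : K), p ≤ q ∧ c ≠ 0 ∧
        mEval α (fun l => Matrix.single (i l) (j l) (1 : K))
          = c • Matrix.single p q (1 : K) := by
  classical
  set P : Equiv.Perm (Fin m) → Matrix (Fin n) (Fin n) K := fun σ =>
    (List.ofFn fun l => Matrix.single (i (σ l)) (j (σ l)) (1 : K)).prod with hP
  have hmEval : mEval α (fun l => Matrix.single (i l) (j l) (1 : K))
      = ∑ σ : Equiv.Perm (Fin m), α σ • P σ := rfl
  -- describe each product
  have key : ∀ σ : Equiv.Perm (Fin m), P σ = 0 ∨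
      ∃ a ∈ Set.range (fun l => (i l, j l)), ∃ b ∈ Set.range (fun l => (i l, j l)),
        P σ = Matrix.single a.1 b.2 (1 : K) ∧
        ∀ l, a.1 ≤ i l ∧ j l ≤ b.2 := by
    intro σ
    have hne : (List.ofFn fun l => ((i (σ l), j (σ l)) : Fin n × Fin n)) ≠ [] := by
      simp only [ne_eq, List.ofFn_eq_nil_iff]
      omega
    have hle : ∀ p ∈ (List.ofFn fun l => ((i (σ l), j (σ l)) : Fin n × Fin n)), p.1 ≤ p.2 := by
      intro p hp
      rw [List.mem_ofFn] at hp
      obtain ⟨l, rfl⟩ := hp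
      exact hij _
    have := prod_stdBasis_units (K := K) _ hne hle
    rw [List.map_ofFn] at this
    rcases this with h0 | ⟨a, ha, b, hb, hprod, hbd⟩
    · left; exact h0
    · right
      rw [List.mem_ofFn] at ha hb
      obtain ⟨la, rfl⟩ := ha
      obtain ⟨lb, rfl⟩ := hb
      refine ⟨_, ⟨σ la, rfl⟩, _, ⟨σ lb, rfl⟩, hprod, ?_⟩
      intro l
      have := hbd (i (σ (σ.symm l)), j (σ (σ.symm l))) (by
        rw [List.mem_ofFn]; exact ⟨σ.symm l, rfl⟩)
      simpa using this
  by_cases hT : ∀ σ : Equiv.Perm (Fin m), P σ = 0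
  · left
    rw [hmEval]
    exact Finset.sum_eq_zero fun σ _ => by rw [hT σ, smul_zero]
  · push_neg at hT
    obtain ⟨σ₀, hσ₀⟩ := hT
    rcases key σ₀ with h | ⟨a, ⟨la, rfl⟩, b, ⟨lb, rfl⟩, hprod₀, hbd₀⟩
    · exact absurd h hσ₀
    set p := i la with hp
    set q := j lb with hq
    have hpq : p ≤ q := le_trans (hij la) (hbd₀ la).2
    -- every nonzero product equals E_{p,q}
    have huniq : ∀ σ, P σ ≠ 0 → P σ = Matrix.single p q (1 : K) := by
      intro σ hσ
      rcases key σ with h | ⟨a', ⟨la', rfl⟩, b', ⟨lb', rfl⟩, hprod, hbd⟩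
      · exact absurd h hσ
      have h1 : i la' = p := le_antisymm (hbd la).1 (hbd₀ la').1
      have h2 : j lb' = q := le_antisymm (hbd₀ lb').2 (hbd lb).2
      rw [hprod]
      simp only [h1, h2]
    set c : K := ∑ σ ∈ Finset.univ.filter (fun σ => P σ ≠ 0), α σ with hc
    have hsum : mEval α (fun l => Matrix.single (i l) (j l) (1 : K))
        = c • Matrix.single p q (1 : K) := by
      rw [hmEval, hc, Finset.sum_smul]
      rw [← Finset.sum_filter_add_sum_filter_not Finset.univ (fun σ => P σ ≠ 0)]
      have h2 : ∑ σ ∈ Finset.univ.filter (fun σ => ¬ P σ ≠ 0), α σ • P σ = 0 := by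
        refine Finset.sum_eq_zero fun σ hσ => ?_
        simp only [Finset.mem_filter, not_not] at hσ
        rw [hσ.2, smul_zero]
      rw [h2, add_zero]
      refine Finset.sum_congr rfl fun σ hσ => ?_
      simp only [Finset.mem_filter] at hσ
      rw [huniq σ hσ.2]
    rcases eq_or_ne c 0 with hc0 | hc0
    · left; rw [hsum, hc0, zero_smul]
    · right; exact ⟨p, q, c, hpq, hc0, hsum⟩
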